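/- Let k ≥ 1 and let X : {0,1,2,3}^{2k} → ℝ be a tensor invariant under every permutation of its 2k indices. Define the matrix T, with rows and columns indexed by tuples 𝛍, 𝛎 ∈ {0,1,2,3}^k, by T_{𝛍𝛎} = X_{μ₁…μ_k ν₁…ν_k}, and define y_α for α ∈ ℕ³ with |α| ≤ 2k as the value of X on any index tuple containing exactly α₁ indices equal to 1, α₂ indices equal to 2, α₃ indices equal to 3, and all remaining indices equal to 0 (well defined by the permutation invariance of X). Then T is positive semidefinite if and only if the moment matrix M_k(y), indexed by multi-indices α, β ∈ ℕ³ with |α|,|β| ≤ k and entries M_k(y)_{αβ} = y_{α+β}, is positive semidefinite. -/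

import Mathlib

open Matrix

noncomputable section

/-- Multi-indices `α ∈ ℕ^n` of degree `|α| ≤ k`. -/
abbrev MIdx (n k : ℕ) := {α : Fin n → Fin (k + 1) // (∑ i, (α i).1) ≤ k}

/-- The multi-index as an element of `ℕ^n`. -/
def MIdx.toNat {n k : ℕ} (α : MIdx n k) : Fin n → ℕ := fun i => (α.1 i).1

/-- The moment matrix of order `k`: `M_k(y)_{αβ} = y_{α+β}` for `|α|,|β| ≤ k`. -/
def momentMatrix (n k : ℕ) (y : (Fin n → ℕ) → ℝ) :
    Matrix (MIdx n k) (MIdx n k) ℝ :=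
  Matrix.of fun α β => y (α.toNat + β.toNat)

/-- A canonical index tuple of length `N` containing exactly `α 0` indices equal to `1`,
`α 1` indices equal to `2`, `α 2` indices equal to `3`, the rest being `0`. -/
def idxTuple (N : ℕ) (α : Fin 3 → ℕ) : Fin N → Fin 4 := fun i =>
  if (i : ℕ) < α 0 then 1
  else if (i : ℕ) < α 0 + α 1 then 2
  else if (i : ℕ) < α 0 + α 1 + α 2 then 3
  else 0

/-- number of indices equal to 1, 2, 3 respectively -/
def cnt {N : ℕ} (w : Fin N → Fin 4) : Fin 3 → ℕ :=
  fun j => (Finset.univ.filter fun i => w i = j.succ).card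

lemma cnt_le {N : ℕ} (w : Fin N → Fin 4) (j : Fin 3) : cnt w j ≤ N :=
  le_trans (Finset.card_filter_le _ _) (by simp)

lemma fiber_sum {N : ℕ} (w : Fin N → Fin 4) :
    N = (Finset.univ.filter fun i => w i = 0).card + (cnt w 0 + (cnt w 1 + cnt w 2)) := by
  have h := Finset.card_eq_sum_card_fiberwise
    (s := (Finset.univ : Finset (Fin N))) (t := (Finset.univ : Finset (Fin 4)))
    (f := w) (fun x _ => Finset.mem_univ _)
  simp only [Finset.card_univ, Fintype.card_fin, Fin.sum_univ_four] at h
  unfold cnt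
  have h0 : (0:Fin 3).succ = 1 := rfl
  have h1 : (1:Fin 3).succ = 2 := rfl
  have h2 : (2:Fin 3).succ = 3 := rfl
  rw [h0, h1, h2]
  omega

lemma sum_cnt_le {N : ℕ} (w : Fin N → Fin 4) : cnt w 0 + cnt w 1 + cnt w 2 ≤ N := by
  have := fiber_sum w; omega

lemma card_filter_ico {N a b : ℕ} (hb : b ≤ N) :
    (Finset.univ.filter fun i : Fin N => a ≤ i.val ∧ i.val < b).card = b - a := by
  rw [← Nat.card_Ico a b]
  exact Finset.card_bij' (fun x _ => x.val)
    (fun m hm => ⟨m, lt_of_lt_of_le (Finset.mem_Ico.mp hm).2 hb⟩)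
    (fun x hx => by simp only [Finset.mem_filter] at hx; exact Finset.mem_Ico.mpr hx.2)
    (fun m hm => by simp only [Finset.mem_filter]; exact ⟨Finset.mem_univ _, Finset.mem_Ico.mp hm⟩)
    (fun x _ => rfl) (fun m _ => rfl)

lemma cnt_idxTuple {N : ℕ} (α : Fin 3 → ℕ) (h : α 0 + α 1 + α 2 ≤ N) :
    cnt (idxTuple N α) = α := by
  funext j
  fin_cases j
  · show (Finset.univ.filter fun i : Fin N => idxTuple N α i = 1).card = α 0
    rw [Finset.filter_congr (fun i _ => show (idxTuple N α i = 1) ↔ (0 ≤ i.val ∧ i.val < α 0) by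
      unfold idxTuple; split_ifs <;> simp_all <;> omega)]
    rw [card_filter_ico (by omega)]; omega
  · show (Finset.univ.filter fun i : Fin N => idxTuple N α i = 2).card = α 1
    rw [Finset.filter_congr (fun i _ => show (idxTuple N α i = 2) ↔ (α 0 ≤ i.val ∧ i.val < α 0 + α 1) by
      unfold idxTuple; split_ifs <;> simp_all <;> omega)]
    rw [card_filter_ico (by omega)]; omega
  · show (Finset.univ.filter fun i : Fin N => idxTuple N α i = 3).card = α 2
    rw [Finset.filter_congr (fun i _ => show (idxTuple N α i = 3) ↔ (α 0 + α 1 ≤ i.val ∧ i.val < α 0 + α 1 + α 2) by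
      unfold idxTuple; split_ifs <;> simp_all <;> omega)]
    rw [card_filter_ico (by omega)]; omega

lemma exists_perm {N : ℕ} {w w' : Fin N → Fin 4} (h : cnt w = cnt w') :
    ∃ π : Equiv.Perm (Fin N), w ∘ π = w' := by
  have key : ∀ a : Fin 4, (Finset.univ.filter fun i => w' i = a).card
      = (Finset.univ.filter fun i => w i = a).card := by
    have e0 := fiber_sum w
    have e0' := fiber_sum w'
    have h0 := congrFun h 0
    have h1 := congrFun h 1
    have h2 := congrFun h 2
    intro a
    fin_cases a
    · show (Finset.univ.filter fun i => w' i = 0).card = (Finset.univ.filter fun i => w i = 0).card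
      unfold cnt at h0 h1 h2 e0 e0'; omega
    · exact h0.symm
    · exact h1.symm
    · exact h2.symm
  refine ⟨Equiv.ofFiberEquiv (f := w') (g := w)
    (fun a => Fintype.equivOfCardEq (by simp only [Fintype.card_subtype]; exact key a)), ?_⟩
  funext x
  exact Equiv.ofFiberEquiv_map _ x

lemma join_lt {k : ℕ} (i : Fin (2 * k)) (h : ¬ (i : ℕ) < k) : (i : ℕ) - k < k := by
  have := i.isLt; omega

lemma cnt_join {k : ℕ} (μ ν : Fin k → Fin 4) :
    cnt (fun i : Fin (2 * k) =>
      if h : (i : ℕ) < k then μ ⟨(i : ℕ), h⟩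
      else ν ⟨(i : ℕ) - k, join_lt i h⟩) = cnt μ + cnt ν := by
  set w : Fin (2 * k) → Fin 4 := fun i =>
      if h : (i : ℕ) < k then μ ⟨(i : ℕ), h⟩
      else ν ⟨(i : ℕ) - k, join_lt i h⟩ with hw
  funext j
  show (Finset.univ.filter fun i => w i = j.succ).card = cnt μ j + cnt ν j
  rw [← Finset.card_filter_add_card_filter_not
    (s := Finset.univ.filter fun i => w i = j.succ) (p := fun i : Fin (2*k) => (i : ℕ) < k)]
  congr 1
  · rw [Finset.filter_filter]
    refine Finset.card_bij' (fun x hx => (⟨(x : ℕ), by simp only [Finset.mem_filter] at hx; exact hx.2.2⟩ : Fin k))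
      (fun m _ => (⟨(m : ℕ), by omega⟩ : Fin (2*k))) ?_ ?_ ?_ ?_
    · intro x hx
      simp only [Finset.mem_filter, hw] at hx ⊢
      refine ⟨Finset.mem_univ _, ?_⟩
      have := hx.2.1
      rw [dif_pos hx.2.2] at this
      exact this
    · intro m hm
      simp only [Finset.mem_filter, hw] at hm ⊢
      refine ⟨Finset.mem_univ _, ?_, m.isLt⟩
      rw [dif_pos (show ((⟨(m:ℕ), by omega⟩ : Fin (2*k)) : ℕ) < k from m.isLt)]
      exact hm.2
    · intro x hx; exact Fin.ext rfl
    · intro m hm; exact Fin.ext rfl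
  · rw [Finset.filter_filter]
    refine Finset.card_bij' (fun x hx => (⟨(x : ℕ) - k, by
        simp only [Finset.mem_filter] at hx; have := x.isLt; omega⟩ : Fin k))
      (fun m _ => (⟨k + (m : ℕ), by omega⟩ : Fin (2*k))) ?_ ?_ ?_ ?_
    · intro x hx
      simp only [Finset.mem_filter, hw] at hx ⊢
      refine ⟨Finset.mem_univ _, ?_⟩
      have h2 := hx.2.1
      rw [dif_neg hx.2.2] at h2
      exact h2
    · intro m hm
      simp only [Finset.mem_filter, hw] at hm ⊢
      refine ⟨Finset.mem_univ _, ?_, by omega⟩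
      rw [dif_neg (show ¬ ((⟨k + (m:ℕ), by omega⟩ : Fin (2*k)) : ℕ) < k by simp)]
      convert hm.2 using 3
      simp
    · intro x hx
      simp only [Finset.mem_filter] at hx
      exact Fin.ext (by simp; omega)
    · intro m hm; exact Fin.ext (by simp)

/-- The degree vector of a `k`-tuple, as a multi-index of degree `≤ k`. -/
def cntIdx {k : ℕ} (μ : Fin k → Fin 4) : MIdx 3 k :=
  ⟨fun j => ⟨cnt μ j, Nat.lt_succ_of_le (cnt_le μ j)⟩, by
    simpa [Fin.sum_univ_three] using sum_cnt_le μ⟩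

lemma cntIdx_toNat {k : ℕ} (μ : Fin k → Fin 4) : (cntIdx μ).toNat = cnt μ := rfl

/-- The canonical representative tuple of a multi-index. -/
def rep {k : ℕ} (α : MIdx 3 k) : Fin k → Fin 4 := idxTuple k α.toNat

lemma cnt_rep {k : ℕ} (α : MIdx 3 k) : cnt (rep α) = α.toNat :=
  cnt_idxTuple _ (by have := α.2; simpa [Fin.sum_univ_three, MIdx.toNat] using this)

lemma cntIdx_rep {k : ℕ} (α : MIdx 3 k) : cntIdx (rep α) = α := by
  apply Subtype.ext
  funext j
  apply Fin.ext
  show cnt (rep α) j = _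
  rw [cnt_rep]
  rfl

/-- for a permutation-invariant tensor `X : {0,1,2,3}^{2k} → ℝ` with
associated matrix `T_{𝛍𝛎} = X_{μ₁…μ_k ν₁…ν_k}` and associated tms `y` of degree `2k`
in 3 variables, `T` is positive semidefinite if and only if the moment matrix `M_k(y)`
is positive semidefinite. -/
theorem partial_transpose_posSemidef_iff_moment_matrix (k : ℕ) (hk : 1 ≤ k)
    (X : (Fin (2 * k) → Fin 4) → ℝ)
    (hsym : ∀ (π : Equiv.Perm (Fin (2 * k))) (μs : Fin (2 * k) → Fin 4),
      X (μs ∘ π) = X μs)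
    (y : (Fin 3 → ℕ) → ℝ)
    (hy : ∀ α : Fin 3 → ℕ, (∑ i, α i) ≤ 2 * k → y α = X (idxTuple (2 * k) α)) :
    (Matrix.of fun μs νs : Fin k → Fin 4 =>
        X (fun i : Fin (2 * k) =>
          if h : (i : ℕ) < k then μs ⟨(i : ℕ), h⟩
          else νs ⟨(i : ℕ) - k, by have := i.isLt; omega⟩)).PosSemidef
    ↔ (momentMatrix 3 k y).PosSemidef := by
  have hX : ∀ w : Fin (2 * k) → Fin 4, X w = y (cnt w) := by
    intro w
    have hs : cnt w 0 + cnt w 1 + cnt w 2 ≤ 2 * k := sum_cnt_le w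
    rw [hy (cnt w) (by simpa [Fin.sum_univ_three] using hs)]
    obtain ⟨π, hπ⟩ := exists_perm (cnt_idxTuple (cnt w) hs)
    conv_lhs => rw [← hπ]
    exact hsym π _
  set T : Matrix (Fin k → Fin 4) (Fin k → Fin 4) ℝ :=
    Matrix.of fun μs νs : Fin k → Fin 4 =>
        X (fun i : Fin (2 * k) =>
          if h : (i : ℕ) < k then μs ⟨(i : ℕ), h⟩
          else νs ⟨(i : ℕ) - k, by have := i.isLt; omega⟩) with hTdef
  have hT_entry : ∀ μ ν, T μ ν = momentMatrix 3 k y (cntIdx μ) (cntIdx ν) := by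
    intro μ ν
    show X _ = y ((cntIdx μ).toNat + (cntIdx ν).toNat)
    rw [hX, cnt_join, cntIdx_toNat, cntIdx_toNat]
  set A : Matrix (MIdx 3 k) (Fin k → Fin 4) ℝ :=
    Matrix.of fun α μ => if α = cntIdx μ then 1 else 0 with hAdef
  set B : Matrix (Fin k → Fin 4) (MIdx 3 k) ℝ :=
    Matrix.of fun μ α => if μ = rep α then 1 else 0 with hBdef
  have hT : T = Aᴴ * momentMatrix 3 k y * A := by
    ext μ ν
    rw [hT_entry]
    simp [Matrix.mul_apply, hAdef, Finset.sum_ite_eq, ite_mul, mul_ite]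
  have hM : momentMatrix 3 k y = Bᴴ * T * B := by
    ext α β
    have : T (rep α) (rep β) = momentMatrix 3 k y α β := by
      rw [hT_entry, cntIdx_rep, cntIdx_rep]
    rw [← this]
    simp [Matrix.mul_apply, hBdef, Finset.sum_ite_eq, ite_mul, mul_ite]
  constructor
  · intro h
    rw [hM]
    exact h.conjTranspose_mul_mul_same B
  · intro h
    rw [hT]
    exact h.conjTranspose_mul_mul_same A
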